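/- Let (X_i)_{i≥1} be the stages of the discrete self-similar fractal generated by the Sierpinski triangle generator G = {(0,0),(1,0),(0,1)}. Then for every i ≥ 1, X_i = {(x,y) ∈ ℕ² | x + y < 2^i and the bitwise AND of x and y equals 0}. -/

import Mathlib

/-- Two lattice points are adjacent iff they are at Euclidean distance 1
(i.e. they differ by exactly 1 in exactly one coordinate). -/
def adjPt (p q : ℕ × ℕ) : Prop :=
  (p.1 = q.1 ∧ (p.2 + 1 = q.2 ∨ q.2 + 1 = p.2)) ∨
  (p.2 = q.2 ∧ (p.1 + 1 = q.1 ∨ q.1 + 1 = p.1))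

/-- The graph with vertex set `S` and an edge between any two points at
Euclidean distance 1. -/
def gridGraph (S : Set (ℕ × ℕ)) : SimpleGraph S where
  Adj p q := adjPt p.1 q.1
  symm := by
    refine ⟨?_⟩
    rintro ⟨p, hp⟩ ⟨q, hq⟩ (⟨h1, h2⟩ | ⟨h1, h2⟩)
    · exact Or.inl ⟨h1.symm, h2.symm⟩
    · exact Or.inr ⟨h1.symm, h2.symm⟩
  loopless := by
    refine ⟨?_⟩
    rintro ⟨p, hp⟩ (⟨_, h | h⟩ | ⟨_, h | h⟩) <;> omega

/-- A set `S ⊆ ℕ²` is connected if its grid graph is connected. -/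
def IsConnectedSet (S : Set (ℕ × ℕ)) : Prop := (gridGraph S).Connected

/-- `wG G = max{x | (x,y) ∈ G} + 1`. -/
noncomputable def wG (G : Set (ℕ × ℕ)) : ℕ := sSup ((fun p => p.1) '' G) + 1

/-- `hG G = max{y | (x,y) ∈ G} + 1`. -/
noncomputable def hG (G : Set (ℕ × ℕ)) : ℕ := sSup ((fun p => p.2) '' G) + 1

/-- The rectangle `{0,…,w−1} × {0,…,h−1}`. -/
def gridBox (w h : ℕ) : Set (ℕ × ℕ) := {p | p.1 < w ∧ p.2 < h}

/-- `G` is a generator of a discrete self-similar fractal. -/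
structure IsGenerator (G : Set (ℕ × ℕ)) : Prop where
  finite : G.Finite
  zero_mem : (0, 0) ∈ G
  connected : IsConnectedSet G
  one_lt_w : 1 < wG G
  one_lt_h : 1 < hG G
  ssubset_box : G ⊂ gridBox (wG G) (hG G)

/-- The stages of the discrete self-similar fractal generated by `G`:
`X_1 = G` and `X_{i+1} = X_i + (wG^i, hG^i)·G`.  (`stage G 0` is unused.) -/
noncomputable def stage (G : Set (ℕ × ℕ)) : ℕ → Set (ℕ × ℕ)
  | 0 => ∅
  | 1 => G
  | (i + 2) => {p | ∃ a ∈ stage G (i + 1), ∃ b ∈ G,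
      p = (a.1 + wG G ^ (i + 1) * b.1, a.2 + hG G ^ (i + 1) * b.2)}

/-- The discrete self-similar fractal `F = ⋃_{i ≥ 1} X_i` generated by `G`. -/
noncomputable def fractal (G : Set (ℕ × ℕ)) : Set (ℕ × ℕ) := ⋃ i : ℕ, stage G (i + 1)

/-- The generator of the Sierpinski triangle: `{(0,0),(1,0),(0,1)}`. -/
def sierpGen : Set (ℕ × ℕ) := {(0, 0), (1, 0), (0, 1)}


lemma aux_two_pow_add_land (n x y : ℕ) (hy : y < 2^n) : Nat.land (2^n + x) y = Nat.land x y := by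
  show (2^n + x) &&& y = x &&& y
  apply Nat.eq_of_testBit_eq
  intro k
  rcases lt_or_ge k n with hk | hk
  · simp [Nat.testBit_land, Nat.testBit_two_pow_add_gt hk]
  · have h1 : Nat.testBit y k = false := Nat.testBit_lt_two_pow
      (lt_of_lt_of_le hy (Nat.pow_le_pow_right (by norm_num) hk))
    simp [Nat.testBit_land, h1]

lemma aux_land_div2 (x y : ℕ) (h : Nat.land x y = 0) : Nat.land (x / 2) (y / 2) = 0 := by
  show x / 2 &&& y / 2 = 0
  replace h : x &&& y = 0 := h
  apply Nat.eq_of_testBit_eq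
  intro k
  have h1 : Nat.testBit (x &&& y) (k+1) = false := by rw [h]; simp
  simp [Nat.testBit_land] at h1
  simp [Nat.testBit_land, ← Nat.testBit_add_one]
  tauto

lemma aux_disj_add_lt (n : ℕ) : ∀ x y : ℕ, x < 2^n → y < 2^n → Nat.land x y = 0 → x + y < 2^n := by
  induction n with
  | zero => intro x y hx hy _; simp at hx hy; omega
  | succ n ih =>
    intro x y hx hy h
    have h2 := aux_land_div2 x y h
    have hx2 : x / 2 < 2^n := by rw [pow_succ] at hx; omega
    have hy2 : y / 2 < 2^n := by rw [pow_succ] at hy; omega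
    have hd := ih _ _ hx2 hy2 h2
    have hpar : ¬ (x % 2 = 1 ∧ y % 2 = 1) := by
      intro ⟨h1, h2'⟩
      replace h : x &&& y = 0 := h
      have := congrArg (fun z => Nat.testBit z 0) h
      simp [Nat.testBit_land, Nat.testBit_zero, h1, h2'] at this
    rw [pow_succ]
    omega

lemma aux_land_comm (x y : ℕ) : Nat.land x y = Nat.land y x := Nat.land_comm x y

lemma wG_sierp : wG sierpGen = 2 := by
  have h : ((fun p : ℕ × ℕ => p.1) '' sierpGen) = {0, 1} := by
    ext x; simp [sierpGen]; tauto
  rw [wG, h, csSup_pair]; simp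

lemma hG_sierp : hG sierpGen = 2 := by
  have h : ((fun p : ℕ × ℕ => p.2) '' sierpGen) = {0, 1} := by
    ext x; simp [sierpGen]; tauto
  rw [hG, h, csSup_pair]; simp

/-- for the Sierpinski triangle generator, for every `i ≥ 1`,
`X_i = {(x,y) | x + y < 2^i and x AND y = 0}`. -/
theorem sierpinski_stage_eq (i : ℕ) (hi : 1 ≤ i) :
    stage sierpGen i =
      {p : ℕ × ℕ | p.1 + p.2 < 2 ^ i ∧ Nat.land p.1 p.2 = 0} := by
  induction i, hi using Nat.le_induction with
  | base =>
    rw [show stage sierpGen 1 = sierpGen from rfl]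
    ext ⟨x, y⟩
    simp only [sierpGen, Set.mem_insert_iff, Set.mem_singleton_iff, Set.mem_setOf_eq,
      Prod.mk.injEq]
    constructor
    · rintro (⟨rfl, rfl⟩ | ⟨rfl, rfl⟩ | ⟨rfl, rfl⟩) <;> exact ⟨by norm_num, by decide⟩
    · rintro ⟨h1, h2⟩
      have h4 : x < 2 := by omega
      have h5 : y < 2 := by omega
      interval_cases x <;> interval_cases y <;> revert h2 <;> decide
  | succ n hn ih =>
    obtain ⟨j, rfl⟩ : ∃ j, n = j + 1 := ⟨n - 1, by omega⟩
    have hpow : (0:ℕ) < 2 ^ (j+1) := by positivity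
    ext ⟨x, y⟩
    constructor
    · rintro ⟨a, ha, b, hb, hp⟩
      rw [ih] at ha
      obtain ⟨ha1, ha2⟩ := ha
      rw [wG_sierp, hG_sierp] at hp
      simp only [sierpGen, Set.mem_insert_iff, Set.mem_singleton_iff] at hb
      have hax : a.1 < 2 ^ (j+1) := by omega
      have hay : a.2 < 2 ^ (j+1) := by omega
      rcases hb with rfl | rfl | rfl <;>
        simp only [Prod.mk.injEq] at hp <;>
        obtain ⟨rfl, rfl⟩ := hp <;>
        constructor
      · rw [pow_succ]; omega
      · show Nat.land (a.1 + 2 ^ (j+1) * 0) (a.2 + 2 ^ (j+1) * 0) = 0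
        simpa using ha2
      · rw [pow_succ]; omega
      · show Nat.land (a.1 + 2 ^ (j+1) * 1) (a.2 + 2 ^ (j+1) * 0) = 0
        have e : a.1 + 2 ^ (j+1) * 1 = 2 ^ (j+1) + a.1 := by ring
        rw [e, mul_zero, add_zero, aux_two_pow_add_land _ _ _ hay]
        exact ha2
      · rw [pow_succ]; omega
      · show Nat.land (a.1 + 2 ^ (j+1) * 0) (a.2 + 2 ^ (j+1) * 1) = 0
        have e : a.2 + 2 ^ (j+1) * 1 = 2 ^ (j+1) + a.2 := by ring
        rw [mul_zero, add_zero, e, aux_land_comm,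
          aux_two_pow_add_land _ _ _ hax, aux_land_comm]
        exact ha2
    · rintro ⟨hsum, hland⟩
      simp only [Set.mem_setOf_eq] at hsum hland
      rw [pow_succ] at hsum
      rw [show stage sierpGen (j + 1 + 1) = {p | ∃ a ∈ stage sierpGen (j + 1), ∃ b ∈ sierpGen,
          p = (a.1 + wG sierpGen ^ (j + 1) * b.1, a.2 + hG sierpGen ^ (j + 1) * b.2)} from rfl]
      rw [wG_sierp, hG_sierp]
      rcases lt_or_ge x (2 ^ (j+1)) with hx | hx
      · rcases lt_or_ge y (2 ^ (j+1)) with hy | hy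
        · -- both small
          refine ⟨(x, y), ?_, (0, 0), by simp [sierpGen], by simp⟩
          rw [ih]
          exact ⟨aux_disj_add_lt _ _ _ hx hy hland, hland⟩
        · -- y big
          have hx' : x < 2 ^ (j+1) := hx
          have hy2 : y - 2 ^ (j+1) < 2 ^ (j+1) := by omega
          have hyd : y = 2 ^ (j+1) + (y - 2 ^ (j+1)) := by omega
          refine ⟨(x, y - 2 ^ (j+1)), ?_, (0, 1), by simp [sierpGen], ?_⟩
          · rw [ih]
            refine ⟨by omega, ?_⟩
            show Nat.land x (y - 2 ^ (j+1)) = 0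
            have h5 := aux_two_pow_add_land (j+1) (y - 2 ^ (j+1)) x hx'
            rw [← hyd] at h5
            rw [aux_land_comm, ← h5, aux_land_comm, hland]
          · simp only [Prod.mk.injEq]
            constructor <;> omega
      · -- x big
        have hy : y < 2 ^ (j+1) := by omega
        have hx2 : x - 2 ^ (j+1) < 2 ^ (j+1) := by omega
        have hxd : x = 2 ^ (j+1) + (x - 2 ^ (j+1)) := by omega
        refine ⟨(x - 2 ^ (j+1), y), ?_, (1, 0), by simp [sierpGen], ?_⟩
        · rw [ih]
          refine ⟨by omega, ?_⟩
          show Nat.land (x - 2 ^ (j+1)) y = 0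
          have h5 := aux_two_pow_add_land (j+1) (x - 2 ^ (j+1)) y hy
          rw [← hxd] at h5
          rw [← h5, hland]
        · simp only [Prod.mk.injEq]
          constructor <;> omega
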